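/- arXiv:2012.10146 — 2 statements merged into one kernel-verified Lean document; each statement's English description precedes it below -/
import Mathlib

section
/- Under the Tenderstake reward scheme, the total reward a player i can receive by attempting to decide on a single value together with identifying deviators is strictly less than 2 · s_i^1 · R^1: the per-decision reward s_i^1·R^1 plus a slash bonus strictly bounded by s_i^1·R^1. -/
/-- Total reward for deciding a value plus cumulative slash bonus is
strictly less than 2 · s_i^1 · R^1. -/
theorem stmt_6 {ι : Type*} (P : Finset ι) (g : ι → ℝ)
    (i : ι) (hiP : i ∈ P)
    (hgsum : ∑ j ∈ P, g j = 1)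
    (hgpos : ∀ j ∈ P, 0 < g j)
    (newDevs : ℕ → Finset ι)
    (hsub : ∀ H, newDevs H ⊆ P)
    (hdisj : ∀ H K, H ≠ K → Disjoint (newDevs H) (newDevs K))
    (hnoti : ∀ H, i ∉ newDevs H)
    (s1 R1 : ℝ) (hpos : 0 < s1 * R1) :
    ∀ H : ℕ,
      s1 * R1 + ∑ k ∈ Finset.range H, s1 * R1 * (∑ j ∈ newDevs k, g j)
        < 2 * (s1 * R1) := by
  classical
  intro H
  have key : ∑ k ∈ Finset.range H, (∑ j ∈ newDevs k, g j) < 1 := by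
    have hb : ∑ k ∈ Finset.range H, (∑ j ∈ newDevs k, g j)
        = ∑ j ∈ (Finset.range H).biUnion newDevs, g j := by
      rw [Finset.sum_biUnion]
      intro a _ b _ hab
      exact hdisj a b hab
    rw [hb]
    have hsubU : (Finset.range H).biUnion newDevs ⊆ P.erase i := by
      intro x hx
      rcases Finset.mem_biUnion.mp hx with ⟨k, _, hk⟩
      refine Finset.mem_erase.mpr ⟨?_, hsub k hk⟩
      rintro rfl; exact hnoti k hk
    have h1 : ∑ j ∈ (Finset.range H).biUnion newDevs, g j ≤ ∑ j ∈ P.erase i, g j := by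
      refine Finset.sum_le_sum_of_subset_of_nonneg hsubU ?_
      intro j hj _
      exact le_of_lt (hgpos j (Finset.mem_of_mem_erase hj))
    have h2 : ∑ j ∈ P.erase i, g j = 1 - g i := by
      have := Finset.add_sum_erase P g hiP
      linarith [this, hgsum]
    have := hgpos i hiP
    linarith
  have hsum : ∑ k ∈ Finset.range H, s1 * R1 * (∑ j ∈ newDevs k, g j)
      = s1 * R1 * ∑ k ∈ Finset.range H, (∑ j ∈ newDevs k, g j) := by
    rw [Finset.mul_sum]
  rw [hsum]
  nlinarith
end

section
/- Monotonicity of adversarial share under slashing of only Byzantine players: if at every height the set of newly slashed deviators is contained in the Byzantine set B, and shares evolve by the Tenderstake slashing rule, then the total adversarial share s_A^H = Σ_{j ∈ B} s_j^H is non-increasing in H; in particular s_A^H ≤ s_A^1 for all H ≥ 1. -/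
/-- Lemma 7.6 core: if only Byzantine players are ever slashed, the total
adversarial share is non-increasing; in particular it never exceeds its
initial value. -/
theorem stmt_16 {ι : Type*} [DecidableEq ι] (P B : Finset ι) (hBP : B ⊆ P)
    (s : ℕ → ι → ℝ) (D : ℕ → Finset ι) (σ : ℕ → ℝ)
    (hDB : ∀ H, D H ⊆ B)
    (hσ : ∀ H, σ H = ∑ j ∈ D H, s H j)
    (hσ1 : ∀ H, σ H < 1)
    (hnn : ∀ H, ∀ j ∈ P, 0 ≤ s H j)
    (hsum : ∀ H, ∑ j ∈ P, s H j = 1)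
    (hupd : ∀ H, ∀ j, s (H + 1) j = if j ∈ D H then 0 else s H j / (1 - σ H)) :
    (∀ H, ∑ j ∈ B, s (H + 1) j ≤ ∑ j ∈ B, s H j) ∧
      (∀ H, ∑ j ∈ B, s H j ≤ ∑ j ∈ B, s 0 j) := by
  have step : ∀ H, ∑ j ∈ B, s (H + 1) j ≤ ∑ j ∈ B, s H j := by
    intro H
    set S := ∑ j ∈ B, s H j with hS
    have hσnn : 0 ≤ σ H := by
      rw [hσ]
      exact Finset.sum_nonneg fun j hj => hnn H j (hBP (hDB H hj))
    have hSle : S ≤ 1 := by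
      rw [← hsum H]
      exact Finset.sum_le_sum_of_subset_of_nonneg hBP
        (fun j hj _ => hnn H j hj)
    have hpos : 0 < 1 - σ H := by linarith [hσ1 H]
    have hsplit : ∑ j ∈ B, s (H + 1) j = (S - σ H) / (1 - σ H) := by
      rw [← Finset.sum_sdiff (hDB H)]
      have h1 : ∑ j ∈ D H, s (H + 1) j = 0 := by
        apply Finset.sum_eq_zero
        intro j hj
        rw [hupd H j, if_pos hj]
      have h2 : ∑ j ∈ B \ D H, s (H + 1) j = ∑ j ∈ B \ D H, s H j / (1 - σ H) := by
        apply Finset.sum_congr rfl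
        intro j hj
        rw [hupd H j, if_neg (Finset.mem_sdiff.mp hj).2]
      rw [h1, h2, add_zero, ← Finset.sum_div]
      congr 1
      have := Finset.sum_sdiff (f := s H) (hDB H)
      rw [hσ, ← hS] at *
      linarith [Finset.sum_sdiff (f := s H) (hDB H)]
    rw [hsplit, div_le_iff₀ hpos]
    nlinarith
  refine ⟨step, fun H => ?_⟩
  induction H with
  | zero => exact le_refl _
  | succ n ih => exact le_trans (step n) ih
end
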